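/- Let p ≥ 2 and q = p/(p-1). For all real numbers x, y one has |x+y|^p + |x−y|^p ≤ 2(|x|^q + |y|^q)^(p-1) (scalar Clarkson inequality (1.2)). -/

import Mathlib

open Set

private lemma hdP {a s : ℝ} (h : (1:ℝ) + s ≠ 0) :
    HasDerivAt (fun s : ℝ => (1 + s) ^ a) (a * (1 + s) ^ (a - 1)) s := by
  have h1 : HasDerivAt (fun s : ℝ => 1 + s) 1 s := (hasDerivAt_id s).const_add 1
  have h2 := (Real.hasDerivAt_rpow_const (p := a) (Or.inl h)).comp s h1
  simpa [Function.comp_def] using h2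

private lemma hdM {a s : ℝ} (h : (1:ℝ) - s ≠ 0) :
    HasDerivAt (fun s : ℝ => (1 - s) ^ a) (-(a * (1 - s) ^ (a - 1))) s := by
  have h1 : HasDerivAt (fun s : ℝ => 1 - s) (-1) s := (hasDerivAt_id s).const_sub 1
  have h2 := (Real.hasDerivAt_rpow_const (p := a) (Or.inl h)).comp s h1
  simpa [Function.comp_def] using h2

/-- Lemma A : tangent bound `(1+τ)^θ - (1-τ)^θ ≤ τ·θ·((1+τ)^(θ-1)+(1-τ)^(θ-1))`. -/
private lemma lemA {θ : ℝ} (hθ0 : 0 ≤ θ) (hθ1 : θ ≤ 1) {τ : ℝ} (h0 : 0 < τ) (h1 : τ < 1) :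
    (1 + τ) ^ θ - (1 - τ) ^ θ ≤ τ * (θ * ((1 + τ) ^ (θ - 1) + (1 - τ) ^ (θ - 1))) := by
  set E : ℝ → ℝ := fun s => s * (θ * ((1 + s) ^ (θ - 1) + (1 - s) ^ (θ - 1)))
      - ((1 + s) ^ θ - (1 - s) ^ θ) with hE
  have hder : ∀ s ∈ Ico (0:ℝ) 1,
      HasDerivAt E (s * (θ * ((θ - 1) * (1 + s) ^ (θ - 2) - (θ - 1) * (1 - s) ^ (θ - 2)))) s := by
    intro s hs
    have hps : (1:ℝ) + s ≠ 0 := by nlinarith [hs.1, hs.2]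
    have hms : (1:ℝ) - s ≠ 0 := by nlinarith [hs.1, hs.2]
    have d1 := hdP (a := θ - 1) hps
    have d2 := hdM (a := θ - 1) hms
    have d3 := hdP (a := θ) hps
    have d4 := hdM (a := θ) hms
    have e1 : θ - 1 - 1 = θ - 2 := by ring
    rw [e1] at d1 d2
    have dsum : HasDerivAt (fun s : ℝ => θ * ((1 + s) ^ (θ - 1) + (1 - s) ^ (θ - 1)))
        (θ * ((θ - 1) * (1 + s) ^ (θ - 2) + -((θ - 1) * (1 - s) ^ (θ - 2)))) s :=
      (d1.add d2).const_mul θ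
    have dprod := (hasDerivAt_id s).mul dsum
    have dright : HasDerivAt (fun s : ℝ => (1 + s) ^ θ - (1 - s) ^ θ)
        (θ * (1 + s) ^ (θ - 1) - -(θ * (1 - s) ^ (θ - 1))) s := d3.sub d4
    have := dprod.sub dright
    convert this using 1
    · rfl
    · rfl
    · rfl
    simp only [id_eq]
    ring
  have hcont : ContinuousOn E (Ico 0 1) := fun s hs => ((hder s hs).continuousAt).continuousWithinAt
  have hdiff : DifferentiableOn ℝ E (interior (Ico (0:ℝ) 1)) := by
    rw [interior_Ico]
    exact fun s hs => ((hder s ⟨hs.1.le, hs.2⟩).differentiableAt).differentiableWithinAt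
  have hmono : MonotoneOn E (Ico 0 1) := by
    apply monotoneOn_of_deriv_nonneg (convex_Ico 0 1) hcont hdiff
    intro s hs
    rw [interior_Ico] at hs
    rw [(hder s ⟨hs.1.le, hs.2⟩).deriv]
    have hcmp : (1 + s) ^ (θ - 2) ≤ (1 - s) ^ (θ - 2) := by
      apply Real.rpow_le_rpow_of_nonpos (by linarith [hs.2]) (by linarith [hs.1]) (by linarith)
    have h1θ : θ - 1 ≤ 0 := by linarith
    have : 0 ≤ (θ - 1) * (1 + s) ^ (θ - 2) - (θ - 1) * (1 - s) ^ (θ - 2) := by nlinarith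
    have hs0 : (0:ℝ) ≤ s := hs.1.le
    positivity
  have h00 : E 0 = 0 := by simp [hE]
  have := hmono (left_mem_Ico.2 one_pos) ⟨h0.le, h1⟩ h0.le
  rw [h00] at this
  simpa [hE, sub_nonneg] using this

/-- Lemma B : `ρ(τ) = ((1+τ)^θ - (1-τ)^θ)·τ^(1-q)` is monotone on `(0,1)`. -/
private lemma lemB {θ q : ℝ} (hθ0 : 0 ≤ θ) (hθ1 : θ ≤ 1) (hq1 : 1 < q) (hq2 : q ≤ 2) :
    MonotoneOn (fun τ : ℝ => ((1 + τ) ^ θ - (1 - τ) ^ θ) * τ ^ (1 - q)) (Ioo 0 1) := by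
  set ρ : ℝ → ℝ := fun τ => ((1 + τ) ^ θ - (1 - τ) ^ θ) * τ ^ (1 - q) with hρ
  have hder : ∀ τ ∈ Ioo (0:ℝ) 1, HasDerivAt ρ
      ((θ * (1 + τ) ^ (θ - 1) - -(θ * (1 - τ) ^ (θ - 1))) * τ ^ (1 - q)
        + ((1 + τ) ^ θ - (1 - τ) ^ θ) * ((1 - q) * τ ^ (1 - q - 1))) τ := by
    intro τ hτ
    have hps : (1:ℝ) + τ ≠ 0 := by nlinarith [hτ.1, hτ.2]
    have hms : (1:ℝ) - τ ≠ 0 := by nlinarith [hτ.1, hτ.2]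
    have d3 := hdP (a := θ) hps
    have d4 := hdM (a := θ) hms
    have d5 := Real.hasDerivAt_rpow_const (x := τ) (p := 1 - q) (Or.inl (ne_of_gt hτ.1))
    exact (d3.sub d4).mul d5
  apply monotoneOn_of_deriv_nonneg (convex_Ioo 0 1)
    (fun τ hτ => ((hder τ hτ).continuousAt).continuousWithinAt)
    (by rw [isOpen_Ioo.interior_eq]
        exact fun τ hτ => ((hder τ hτ).differentiableAt).differentiableWithinAt)
  intro τ hτ
  rw [isOpen_Ioo.interior_eq] at hτ
  rw [(hder τ hτ).deriv]
  obtain ⟨ht0, ht1⟩ := hτ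
  have hD0 : 0 ≤ (1 + τ) ^ θ - (1 - τ) ^ θ := by
    have := Real.rpow_le_rpow (by linarith) (by linarith : 1 - τ ≤ 1 + τ) hθ0
    linarith
  have hA := lemA hθ0 hθ1 ht0 ht1
  -- rewrite τ^(1-q) = τ * τ^(1-q-1)
  have e1 : τ ^ (1 - q) = τ * τ ^ (1 - q - 1) := by
    have h := Real.rpow_add ht0 1 (1 - q - 1)
    rw [Real.rpow_one, show (1:ℝ) + (1 - q - 1) = 1 - q by ring] at h
    exact h
  have hpw : (0:ℝ) < τ ^ (1 - q - 1) := Real.rpow_pos_of_pos ht0 _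
  rw [e1]
  have key : (q - 1) * ((1 + τ) ^ θ - (1 - τ) ^ θ)
      ≤ τ * (θ * ((1 + τ) ^ (θ - 1) + (1 - τ) ^ (θ - 1))) := by
    calc (q - 1) * ((1 + τ) ^ θ - (1 - τ) ^ θ) ≤ 1 * ((1 + τ) ^ θ - (1 - τ) ^ θ) := by
          apply mul_le_mul_of_nonneg_right (by linarith) hD0
      _ = (1 + τ) ^ θ - (1 - τ) ^ θ := one_mul _
      _ ≤ _ := hA
  nlinarith [hpw, mul_le_mul_of_nonneg_right key hpw.le]

/-- Lemma CC : for `1 ≤ r ≤ 2`, `(1+t)^r + (1-t)^r ≤ 2 + 2(2^(r-1)-1)t^((r+1)/r)` on `[0,1]`. -/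
private lemma lemCC {r : ℝ} (hr1 : 1 ≤ r) (hr2 : r ≤ 2) :
    ∀ t ∈ Icc (0:ℝ) 1, (1 + t) ^ r + (1 - t) ^ r ≤ 2 + 2 * (2 ^ (r - 1) - 1) * t ^ ((r + 1) / r) := by
  have hr0 : (0:ℝ) < r := by linarith
  set θ : ℝ := r - 1 with hθ
  set q : ℝ := (r + 1) / r with hq
  have hθ0 : 0 ≤ θ := by simp [hθ]; linarith
  have hθ1 : θ ≤ 1 := by simp [hθ]; linarith
  have hq1 : 1 < q := by rw [hq, lt_div_iff₀ hr0]; linarith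
  have hq2 : q ≤ 2 := by rw [hq, div_le_iff₀ hr0]; linarith
  have hqpos : (0:ℝ) < q := by linarith
  have hc0 : (0:ℝ) ≤ 2 ^ θ - 1 := by
    have : (2:ℝ) ^ (0:ℝ) ≤ 2 ^ θ := Real.rpow_le_rpow_of_exponent_le one_le_two hθ0
    rw [Real.rpow_zero] at this; linarith
  set h : ℝ → ℝ := fun t => 2 + 2 * (2 ^ θ - 1) * t ^ q - ((1 + t) ^ r + (1 - t) ^ r) with hh
  have h0 : h 0 = 0 := by
    simp [hh, Real.zero_rpow (ne_of_gt hqpos)]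
    norm_num
  have h1 : h 1 = 0 := by
    have e2 : (2:ℝ) ^ r = 2 * 2 ^ θ := by
      rw [show r = 1 + θ by rw [hθ]; ring, Real.rpow_add two_pos, Real.rpow_one]
    simp only [hh]
    rw [Real.one_rpow, show (1:ℝ) + 1 = 2 by norm_num, show (1:ℝ) - 1 = 0 by norm_num,
      Real.zero_rpow (ne_of_gt hr0), e2]
    ring
  have hder : ∀ τ ∈ Ioo (0:ℝ) 1, HasDerivAt h
      (2 * (2 ^ θ - 1) * (q * τ ^ (q - 1))
        - (r * (1 + τ) ^ (r - 1) + -(r * (1 - τ) ^ (r - 1)))) τ := by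
    intro τ hτ
    have hps : (1:ℝ) + τ ≠ 0 := by nlinarith [hτ.1, hτ.2]
    have hms : (1:ℝ) - τ ≠ 0 := by nlinarith [hτ.1, hτ.2]
    have d5 := Real.hasDerivAt_rpow_const (x := τ) (p := q) (Or.inl (ne_of_gt hτ.1))
    exact ((d5.const_mul _).const_add 2).sub ((hdP hps).add (hdM hms))
  -- continuity of h on [0,1]
  have hcont : ContinuousOn h (Icc 0 1) := by
    apply ContinuousOn.sub
    · apply ContinuousOn.add continuousOn_const
      apply ContinuousOn.mul continuousOn_const
      exact fun s _ => (Real.continuousAt_rpow_const s q (Or.inr hqpos.le)).continuousWithinAt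
    · apply ContinuousOn.add
      · intro s _
        exact ((Real.continuousAt_rpow_const _ r (Or.inr hr0.le)).comp
          (by fun_prop : Continuous (fun s : ℝ => 1 + s)).continuousAt).continuousWithinAt
      · intro s _
        exact ((Real.continuousAt_rpow_const _ r (Or.inr hr0.le)).comp
          (by fun_prop : Continuous (fun s : ℝ => 1 - s)).continuousAt).continuousWithinAt
  -- the derivative identity : h' τ = r·τ^(q-1)·(K - ρ τ)
  set K : ℝ := 2 * (2 ^ θ - 1) * q with hK
  set ρ : ℝ → ℝ := fun τ => ((1 + τ) ^ θ - (1 - τ) ^ θ) * τ ^ (1 - q) with hρ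
  have hident : ∀ τ ∈ Ioo (0:ℝ) 1,
      2 * (2 ^ θ - 1) * (q * τ ^ (q - 1)) - (r * (1 + τ) ^ (r - 1) + -(r * (1 - τ) ^ (r - 1)))
        = τ ^ (q - 1) * (K - r * ρ τ) := by
    intro τ hτ
    have hτq : τ ^ (q - 1) * τ ^ (1 - q) = 1 := by
      rw [← Real.rpow_add hτ.1, show q - 1 + (1 - q) = 0 by ring, Real.rpow_zero]
    rw [hρ, hK, ← hθ]
    linear_combination (r * ((1 + τ) ^ θ - (1 - τ) ^ θ)) * hτq
  intro t ht
  suffices goal0 : 0 ≤ h t by simpa [hh, sub_nonneg] using goal0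
  rcases eq_or_lt_of_le ht.1 with h0t | h0t
  · rw [← h0t, h0]
  rcases eq_or_lt_of_le ht.2 with h1t | h1t
  · rw [h1t, h1]
  -- interior point
  have hmem : t ∈ Ioo (0:ℝ) 1 := ⟨h0t, h1t⟩
  have hmonoρ := lemB hθ0 hθ1 hq1 hq2
  rcases le_total (r * ρ t) K with hcase | hcase
  · -- h monotone on [0,t]
    have : MonotoneOn h (Icc 0 t) := by
        apply monotoneOn_of_deriv_nonneg (convex_Icc 0 t)
          (hcont.mono (Icc_subset_Icc le_rfl ht.2))
        · rw [interior_Icc]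
          intro τ hτ
          have hτ' : τ ∈ Ioo (0:ℝ) 1 := ⟨hτ.1, lt_trans hτ.2 h1t⟩
          exact ((hder τ hτ').differentiableAt).differentiableWithinAt
        · rw [interior_Icc]
          intro τ hτ
          have hτ' : τ ∈ Ioo (0:ℝ) 1 := ⟨hτ.1, lt_trans hτ.2 h1t⟩
          rw [(hder τ hτ').deriv, hident τ hτ']
          have hρτ : ρ τ ≤ ρ t := hmonoρ hτ' hmem hτ.2.le
          have hτpw : (0:ℝ) ≤ τ ^ (q - 1) := (Real.rpow_pos_of_pos hτ.1 _).le
          have hKρ : 0 ≤ K - r * ρ τ := by nlinarith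
          positivity
    have := this (left_mem_Icc.2 ht.1) (right_mem_Icc.2 ht.1) ht.1
    rw [h0] at this; exact this
  · -- h antitone on [t,1]
    have : AntitoneOn h (Icc t 1) := by
        apply antitoneOn_of_deriv_nonpos (convex_Icc t 1)
          (hcont.mono (Icc_subset_Icc ht.1 le_rfl))
        · rw [interior_Icc]
          intro τ hτ
          have hτ' : τ ∈ Ioo (0:ℝ) 1 := ⟨lt_trans h0t hτ.1, hτ.2⟩
          exact ((hder τ hτ').differentiableAt).differentiableWithinAt
        · rw [interior_Icc]
          intro τ hτ
          have hτ' : τ ∈ Ioo (0:ℝ) 1 := ⟨lt_trans h0t hτ.1, hτ.2⟩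
          rw [(hder τ hτ').deriv, hident τ hτ']
          have hρτ : ρ t ≤ ρ τ := hmonoρ hmem hτ' hτ.1.le
          have hτpw : (0:ℝ) ≤ τ ^ (q - 1) := (Real.rpow_pos_of_pos hτ'.1 _).le
          have hKρ : K - r * ρ τ ≤ 0 := by nlinarith
          exact mul_nonpos_of_nonneg_of_nonpos hτpw hKρ
    have := this (left_mem_Icc.2 ht.2) (right_mem_Icc.2 ht.2) ht.2
    rw [h1] at this; exact this

/-- chord bound for the concave power function. -/
private lemma lemChord {θ u : ℝ} (hθ0 : 0 ≤ θ) (hθ1 : θ ≤ 1) (hu0 : 0 ≤ u) (hu1 : u ≤ 1) :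
    1 + (2 ^ θ - 1) * u ≤ (1 + u) ^ θ := by
  rcases eq_or_lt_of_le hθ0 with h0 | h0
  · rw [← h0]; simp
  rcases eq_or_lt_of_le hθ1 with h1 | h1
  · rw [h1]; simp [Real.rpow_one]; norm_num
  have hconc := (Real.strictConcaveOn_rpow h0 h1).concaveOn
  have h2 := hconc.2 (by norm_num : (1:ℝ) ∈ Ici (0:ℝ)) (by norm_num : (2:ℝ) ∈ Ici (0:ℝ))
    (by linarith : 0 ≤ 1 - u) hu0 (by ring)
  simp only [smul_eq_mul] at h2
  rw [Real.one_rpow, show (1 - u) * (1:ℝ) + u * 2 = 1 + u by ring] at h2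
  nlinarith [h2]

/-- claim C for `p ∈ [2,3]`. -/
private lemma claimC_base {p : ℝ} (hp2 : 2 ≤ p) (hp3 : p ≤ 3) :
    ∀ t ∈ Icc (0:ℝ) 1, (1 + t) ^ (p - 1) + (1 - t) ^ (p - 1)
      ≤ 2 * (1 + t ^ (p / (p - 1))) ^ (p - 2) := by
  intro t ht
  have hr1 : (1:ℝ) ≤ p - 1 := by linarith
  have hr2 : p - 1 ≤ 2 := by linarith
  have hq : (p - 1 + 1) / (p - 1) = p / (p - 1) := by norm_num
  have hCC := lemCC hr1 hr2 t ht
  rw [hq] at hCC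
  have hθ : p - 1 - 1 = p - 2 := by ring
  rw [hθ] at hCC
  have hu0 : 0 ≤ t ^ (p / (p - 1)) := Real.rpow_nonneg ht.1 _
  have hu1 : t ^ (p / (p - 1)) ≤ 1 := Real.rpow_le_one ht.1 ht.2 (by positivity)
  have hch := lemChord (by linarith : (0:ℝ) ≤ p - 2) (by linarith : p - 2 ≤ 1) hu0 hu1
  calc (1 + t) ^ (p - 1) + (1 - t) ^ (p - 1)
      ≤ 2 + 2 * (2 ^ (p - 2) - 1) * t ^ (p / (p - 1)) := hCC
    _ = 2 * (1 + (2 ^ (p - 2) - 1) * t ^ (p / (p - 1))) := by ring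
    _ ≤ 2 * (1 + t ^ (p / (p - 1))) ^ (p - 2) := by linarith

/-- Critical point argument: claim C at interior points implies the scalar Clarkson bound. -/
private lemma lemCP {p : ℝ} (hp : 2 ≤ p)
    (hC : ∀ t ∈ Ioo (0:ℝ) 1, (1 + t) ^ (p - 1) + (1 - t) ^ (p - 1)
      ≤ 2 * (1 + t ^ (p / (p - 1))) ^ (p - 2)) :
    ∀ t ∈ Icc (0:ℝ) 1, (1 + t) ^ p + (1 - t) ^ p ≤ 2 * (1 + t ^ (p / (p - 1))) ^ (p - 1) := by
  have hp1 : (0:ℝ) < p - 1 := by linarith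
  have hp0 : (0:ℝ) < p := by linarith
  set q : ℝ := p / (p - 1) with hq
  have hqpos : 0 < q := by positivity
  have hq1 : 1 < q := by rw [hq, lt_div_iff₀ hp1]; linarith
  have hpq : (p - 1) * q = p := by rw [hq]; field_simp
  set F : ℝ → ℝ := fun t => 2 * (1 + t ^ q) ^ (p - 1) - ((1 + t) ^ p + (1 - t) ^ p) with hF
  have hcont : ContinuousOn F (Icc 0 1) := by
    apply ContinuousOn.sub
    · apply ContinuousOn.mul continuousOn_const
      intro s _
      exact ((Real.continuousAt_rpow_const _ (p-1) (Or.inr hp1.le)).comp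
        (((Real.continuousAt_rpow_const s q (Or.inr hqpos.le)).const_add 1) :
          ContinuousAt (fun s : ℝ => 1 + s ^ q) s)).continuousWithinAt
    · apply ContinuousOn.add
      · intro s _
        exact ((Real.continuousAt_rpow_const _ p (Or.inr hp0.le)).comp
          (by fun_prop : Continuous (fun s : ℝ => 1 + s)).continuousAt).continuousWithinAt
      · intro s _
        exact ((Real.continuousAt_rpow_const _ p (Or.inr hp0.le)).comp
          (by fun_prop : Continuous (fun s : ℝ => 1 - s)).continuousAt).continuousWithinAt
  have hF0 : F 0 = 0 := by
    simp [hF, Real.zero_rpow (ne_of_gt hqpos), Real.one_rpow]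
    norm_num
  have hF1 : F 1 = 0 := by
    have e2 : (2:ℝ) ^ p = 2 * 2 ^ (p - 1) := by
      have h := Real.rpow_add (show (0:ℝ) < 2 by norm_num) 1 (p - 1)
      rw [Real.rpow_one, show (1:ℝ) + (p - 1) = p by ring] at h
      exact h
    simp only [hF]
    rw [Real.one_rpow, show (1:ℝ) + 1 = 2 by norm_num, show (1:ℝ) - 1 = 0 by norm_num,
      Real.zero_rpow (ne_of_gt hp0), e2]
    ring
  obtain ⟨t₀, ht₀, hmin⟩ := isCompact_Icc.exists_isMinOn (Set.nonempty_Icc.2 zero_le_one) hcont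
  suffices h : 0 ≤ F t₀ by
    intro t ht
    have := le_trans h (hmin ht)
    simpa [hF, sub_nonneg] using this
  rcases eq_or_lt_of_le ht₀.1 with h0t | h0t
  · rw [← h0t, hF0]
  rcases eq_or_lt_of_le ht₀.2 with h1t | h1t
  · rw [h1t, hF1]
  -- interior minimum
  have hmem : t₀ ∈ Ioo (0:ℝ) 1 := ⟨h0t, h1t⟩
  have hps : (1:ℝ) + t₀ ≠ 0 := by nlinarith
  have hms : (1:ℝ) - t₀ ≠ 0 := by nlinarith
  have hupos : (0:ℝ) < 1 + t₀ ^ q := by positivity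
  have hderF : HasDerivAt F
      (2 * ((p - 1) * (1 + t₀ ^ q) ^ (p - 2) * (q * t₀ ^ (q - 1)))
        - (p * (1 + t₀) ^ (p - 1) + -(p * (1 - t₀) ^ (p - 1)))) t₀ := by
    have dq := Real.hasDerivAt_rpow_const (x := t₀) (p := q) (Or.inl (ne_of_gt h0t))
    have dinner : HasDerivAt (fun t : ℝ => 1 + t ^ q) (q * t₀ ^ (q - 1)) t₀ := dq.const_add 1
    have douter := Real.hasDerivAt_rpow_const (x := 1 + t₀ ^ q) (p := p - 1)
      (Or.inl (ne_of_gt hupos))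
    have dcomp := (douter.comp t₀ dinner).const_mul 2
    have e : p - 1 - 1 = p - 2 := by ring
    rw [e] at dcomp
    exact dcomp.sub ((hdP hps).add (hdM hms))
  have hloc : IsLocalMin F t₀ := hmin.isLocalMin (Icc_mem_nhds h0t h1t)
  have hdzero := hloc.hasDerivAt_eq_zero hderF
  -- notation
  set A : ℝ := t₀ ^ (q - 1) with hA
  set B : ℝ := (1 + t₀ ^ q) ^ (p - 2) with hB
  set X : ℝ := (1 + t₀) ^ (p - 1) with hX
  set Y : ℝ := (1 - t₀) ^ (p - 1) with hY
  have hApos : 0 < A := Real.rpow_pos_of_pos h0t _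
  have hBpos : 0 < B := Real.rpow_pos_of_pos hupos _
  -- from the vanishing derivative : 2·A·B = X - Y
  have hkey : 2 * A * B = X - Y := by
    have h2 : 2 * ((p - 1) * B * (q * A)) = p * X - p * Y := by linarith [hdzero]
    have h3 : p * (2 * A * B) = p * (X - Y) := by
      calc p * (2 * A * B) = ((p - 1) * q) * (2 * A * B) := by rw [hpq]
        _ = 2 * ((p - 1) * B * (q * A)) := by ring
        _ = p * X - p * Y := h2
        _ = p * (X - Y) := by ring
    exact mul_left_cancel₀ (ne_of_gt hp0) h3
  have hSB : X + Y ≤ 2 * B := hC t₀ hmem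
  -- algebraic identities
  have e1 : (1 + t₀ ^ q) ^ (p - 1) = (1 + t₀ ^ q) * B := by
    have h := Real.rpow_add hupos 1 (p - 2)
    rw [Real.rpow_one, show (1:ℝ) + (p - 2) = p - 1 by ring] at h
    rw [hB, h]
  have e2 : (1 + t₀) ^ p = (1 + t₀) * X := by
    have h := Real.rpow_add (show (0:ℝ) < 1 + t₀ by nlinarith) 1 (p - 1)
    rw [Real.rpow_one, show (1:ℝ) + (p - 1) = p by ring] at h
    rw [hX, h]
  have e3 : (1 - t₀) ^ p = (1 - t₀) * Y := by
    have h := Real.rpow_add (show (0:ℝ) < 1 - t₀ by nlinarith) 1 (p - 1)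
    rw [Real.rpow_one, show (1:ℝ) + (p - 1) = p by ring] at h
    rw [hY, h]
  have e4 : t₀ ^ q = t₀ * A := by
    have h := Real.rpow_add h0t 1 (q - 1)
    rw [Real.rpow_one, show (1:ℝ) + (q - 1) = q by ring] at h
    rw [hA, h]
  have hFt : F t₀ = 2 * ((1 + t₀ ^ q) * B) - ((1 + t₀) * X + (1 - t₀) * Y) := by
    rw [hF]; simp only; rw [e1, e2, e3]
  have hmul : 0 ≤ F t₀ * A := by
    rw [hFt, e4]
    nlinarith [mul_nonneg hApos.le (sub_nonneg.2 hSB), hkey, mul_pos h0t hApos]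
  exact (mul_nonneg_iff_of_pos_right hApos).mp hmul

/-- Scalar Clarkson inequality on [0,1], by induction on the size of `p`. -/
private lemma scalarClarkson : ∀ n : ℕ, ∀ p : ℝ, 2 ≤ p → p ≤ 2 + n →
    ∀ t ∈ Icc (0:ℝ) 1, (1 + t) ^ p + (1 - t) ^ p ≤ 2 * (1 + t ^ (p / (p - 1))) ^ (p - 1) := by
  intro n
  induction n with
  | zero =>
    intro p hp2 hp3
    exact lemCP hp2 (fun t ht => claimC_base hp2 (by norm_num at hp3; linarith) t
      ⟨ht.1.le, ht.2.le⟩)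
  | succ n ih =>
    intro p hp2 hpn
    rcases le_total p 3 with hp3 | hp3
    · exact lemCP hp2 (fun t ht => claimC_base hp2 hp3 t ⟨ht.1.le, ht.2.le⟩)
    · -- p > 3 : use the induction hypothesis at p - 1
      apply lemCP hp2
      intro t ht
      have hp2' : 2 ≤ p - 1 := by linarith
      have hpn' : p - 1 ≤ 2 + n := by push_cast at hpn ⊢; linarith
      have hIH := ih (p - 1) hp2' hpn' t ⟨ht.1.le, ht.2.le⟩
      have e : p - 1 - 1 = p - 2 := by ring
      rw [e] at hIH
      have hq1pos : (0:ℝ) < p - 2 := by linarith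
      have hmono : t ^ ((p - 1) / (p - 2)) ≤ t ^ (p / (p - 1)) := by
        apply Real.rpow_le_rpow_of_exponent_ge ht.1 ht.2.le
        rw [div_le_div_iff₀ (by linarith) hq1pos]
        nlinarith
      have hnn : 0 ≤ t ^ ((p - 1) / (p - 2)) := Real.rpow_nonneg ht.1.le _
      have hbase : (1 + t ^ ((p - 1) / (p - 2))) ^ (p - 2) ≤ (1 + t ^ (p / (p - 1))) ^ (p - 2) :=
        Real.rpow_le_rpow (by linarith) (by linarith) (by linarith)
      linarith

theorem stmt15 (p q : ℝ) (hp : 2 ≤ p) (hq : q = p / (p - 1)) (x y : ℝ) :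
    |x + y| ^ p + |x - y| ^ p ≤ 2 * (|x| ^ q + |y| ^ q) ^ (p - 1) := by
  subst hq
  have hp0 : (0:ℝ) < p := by linarith
  have hp1 : (0:ℝ) < p - 1 := by linarith
  set q : ℝ := p / (p - 1) with hq
  have hqpos : (0:ℝ) < q := by positivity
  have hqp : q * (p - 1) = p := by rw [hq]; field_simp
  -- the scalar inequality
  have hM : ∀ t ∈ Icc (0:ℝ) 1, (1 + t) ^ p + (1 - t) ^ p ≤ 2 * (1 + t ^ q) ^ (p - 1) := by
    apply scalarClarkson (Nat.ceil p) p hp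
    calc p ≤ Nat.ceil p := Nat.le_ceil p
      _ ≤ 2 + (Nat.ceil p : ℝ) := by linarith [Nat.cast_nonneg (α := ℝ) (Nat.ceil p)]
  -- key inequality for 0 ≤ b ≤ a
  have key : ∀ a b : ℝ, 0 ≤ b → b ≤ a → (a + b) ^ p + (a - b) ^ p
      ≤ 2 * (a ^ q + b ^ q) ^ (p - 1) := by
    intro a b hb hba
    rcases eq_or_lt_of_le (le_trans hb hba) with ha0 | ha0
    · -- a = 0, hence b = 0
      have hb0 : b = 0 := le_antisymm (by linarith) hb
      rw [← ha0, hb0]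
      simp only [add_zero, sub_zero, Real.zero_rpow (ne_of_gt hp0),
        Real.zero_rpow (ne_of_gt hqpos)]
      rw [Real.zero_rpow (ne_of_gt hp1)]
      norm_num
    · -- a > 0 : homogenize with t = b/a
      set t : ℝ := b / a with ht
      have ht0 : 0 ≤ t := div_nonneg hb ha0.le
      have ht1 : t ≤ 1 := (div_le_one ha0).2 hba
      have hMt := hM t ⟨ht0, ht1⟩
      have hap : (0:ℝ) < a ^ p := Real.rpow_pos_of_pos ha0 _
      have haq : (0:ℝ) < a ^ q := Real.rpow_pos_of_pos ha0 _
      have e1 : (a + b) ^ p = a ^ p * (1 + t) ^ p := by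
        rw [← Real.mul_rpow ha0.le (by linarith), mul_add, mul_one, ht,
          mul_div_cancel₀ _ (ne_of_gt ha0)]
      have e2 : (a - b) ^ p = a ^ p * (1 - t) ^ p := by
        rw [← Real.mul_rpow ha0.le (by
            rw [ht, sub_nonneg]; exact (div_le_one ha0).2 hba), mul_sub, mul_one, ht,
          mul_div_cancel₀ _ (ne_of_gt ha0)]
      have e3 : a ^ q + b ^ q = a ^ q * (1 + t ^ q) := by
        rw [mul_add, mul_one, ht, Real.div_rpow hb ha0.le,
          mul_div_cancel₀ _ (ne_of_gt haq)]
      have e4 : (a ^ q * (1 + t ^ q)) ^ (p - 1) = a ^ p * (1 + t ^ q) ^ (p - 1) := by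
        rw [Real.mul_rpow haq.le (by positivity)]
        congr 1
        rw [← Real.rpow_mul ha0.le, hqp]
      rw [e1, e2, e3, e4]
      calc a ^ p * (1 + t) ^ p + a ^ p * (1 - t) ^ p
          = a ^ p * ((1 + t) ^ p + (1 - t) ^ p) := by ring
        _ ≤ a ^ p * (2 * (1 + t ^ q) ^ (p - 1)) := by
            exact mul_le_mul_of_nonneg_left hMt hap.le
        _ = 2 * (a ^ p * (1 + t ^ q) ^ (p - 1)) := by ring
  -- reduction to nonnegative x, y
  have key2 : ∀ x y : ℝ, 0 ≤ x → 0 ≤ y →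
      |x + y| ^ p + |x - y| ^ p ≤ 2 * (|x| ^ q + |y| ^ q) ^ (p - 1) := by
    intro x y hx hy
    rcases le_total y x with h | h
    · have := key x y hy h
      rw [abs_of_nonneg (by linarith : (0:ℝ) ≤ x + y), abs_of_nonneg (by linarith : (0:ℝ) ≤ x - y),
        abs_of_nonneg hx, abs_of_nonneg hy]
      exact this
    · have := key y x hx h
      rw [abs_of_nonneg (by linarith : (0:ℝ) ≤ x + y), abs_of_nonpos (by linarith : x - y ≤ 0),
        abs_of_nonneg hx, abs_of_nonneg hy]
      rw [show -(x - y) = y - x by ring, show x + y = y + x by ring, show x ^ q + y ^ q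
        = y ^ q + x ^ q by ring]
      exact this
  rcases le_total 0 x with hx | hx <;> rcases le_total 0 y with hy | hy
  · exact key2 x y hx hy
  · have := key2 x (-y) hx (by linarith)
    rw [show x + -y = x - y by ring, show x - -y = x + y by ring, abs_neg] at this
    linarith
  · have := key2 (-x) y (by linarith) hy
    rw [show -x + y = -(x - y) by ring, show -x - y = -(x + y) by ring, abs_neg, abs_neg,
      abs_neg] at this
    linarith
  · have := key2 (-x) (-y) (by linarith) (by linarith)
    rw [show -x + -y = -(x + y) by ring, show -x - -y = -(x - y) by ring, abs_neg, abs_neg,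
      abs_neg, abs_neg] at this
    linarith
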